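/- Let E and F be real finite-dimensional inner product spaces and φ : E × ℝ × F → ℝ be twice continuously differentiable (C²). Let paths 𝐅 : ℝ → E, θ : ℝ → ℝ, ξ : ℝ → F be differentiable at t, set p = (𝐅(t), θ(t), ξ(t)), define s(τ) := −(fderiv ℝ φ (𝐅(τ), θ(τ), ξ(τ))) (0, 1, 0), and let c := −θ(t)·D²φ(p)((0, 1, 0), (0, 1, 0)). Suppose the entropy balance θ(t)·s'(t) + D = Φ + r holds, where D, Φ, r ∈ ℝ are the pointwise values of the heat-flux divergence, total nonthermal channel power, and volumetric heating. Then the temperature equation holds: c·θ'(t) = −D + Φ + θ(t)·D²φ(p)((𝐅'(t), 0, 0), (0, 1, 0)) + θ(t)·D²φ(p)((0, 0, ξ'(t)), (0, 1, 0)) + r. (That is, c θ̇ = −Div q₀ + ∑Φ_α + θ ∂²_{θF}φ : Ḟ + θ ∂²_{θξ}φ · ξ̇ + r₀.) -/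

import Mathlib

/-- Temperature form of the heat equation:
With `φ` of class C², entropy `s τ := −Dφ(𝓕 τ, θ τ, ξ τ)(0,1,0)`, heat
capacity `c := −θ(t)·D²φ(p)((0,1,0),(0,1,0))`, and the entropy balance
`θ(t)·s'(t) + D = Φ + r`, the temperature equation holds:
`c·θ'(t) = −D + Φ + θ(t)·D²φ(p)((𝓕'(t),0,0),(0,1,0))
            + θ(t)·D²φ(p)((0,0,ξ'(t)),(0,1,0)) + r`. -/
theorem temperature_equation
    {E F : Type*}
    [NormedAddCommGroup E] [InnerProductSpace ℝ E] [FiniteDimensional ℝ E]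
    [NormedAddCommGroup F] [InnerProductSpace ℝ F] [FiniteDimensional ℝ F]
    (φ : E × ℝ × F → ℝ) (hφ : ContDiff ℝ 2 φ)
    (𝓕 : ℝ → E) (θ : ℝ → ℝ) (ξ : ℝ → F) (t : ℝ)
    (h𝓕 : DifferentiableAt ℝ 𝓕 t) (hθ : DifferentiableAt ℝ θ t)
    (hξ : DifferentiableAt ℝ ξ t)
    (p : E × ℝ × F) (hp : p = (𝓕 t, θ t, ξ t))
    (s : ℝ → ℝ)
    (hs : s = fun τ => -(fderiv ℝ φ (𝓕 τ, θ τ, ξ τ)) (0, 1, 0))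
    (c : ℝ)
    (hc : c = -θ t * (fderiv ℝ (fderiv ℝ φ) p (0, 1, 0)) (0, 1, 0))
    (D Φ r : ℝ)
    (hbal : θ t * deriv s t + D = Φ + r) :
    c * deriv θ t =
      -D + Φ
        + θ t * (fderiv ℝ (fderiv ℝ φ) p (deriv 𝓕 t, 0, 0)) (0, 1, 0)
        + θ t * (fderiv ℝ (fderiv ℝ φ) p (0, 0, deriv ξ t)) (0, 1, 0)
        + r := by

  subst hp hs hc
  -- the path
  have hg : HasDerivAt (fun τ => ((𝓕 τ, θ τ, ξ τ) : E × ℝ × F))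
      (deriv 𝓕 t, deriv θ t, deriv ξ t) t :=
    (h𝓕.hasDerivAt.prodMk (hθ.hasDerivAt.prodMk hξ.hasDerivAt))
  have hf' : DifferentiableAt ℝ (fderiv ℝ φ) ((𝓕 t, θ t, ξ t) : E × ℝ × F) := by
    have : ContDiff ℝ 1 (fderiv ℝ φ) := hφ.fderiv_right (by norm_num)
    exact this.differentiable one_ne_zero _
  have hcomp : HasDerivAt (fun τ => fderiv ℝ φ ((𝓕 τ, θ τ, ξ τ) : E × ℝ × F))
      (fderiv ℝ (fderiv ℝ φ) (𝓕 t, θ t, ξ t) (deriv 𝓕 t, deriv θ t, deriv ξ t)) t :=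
    by have := HasFDerivAt.comp_hasDerivAt (l := fderiv ℝ φ) t hf'.hasFDerivAt hg; exact this
  have happ : HasDerivAt (fun τ => -(fderiv ℝ φ ((𝓕 τ, θ τ, ξ τ) : E × ℝ × F)) (0, 1, 0))
      (-(fderiv ℝ (fderiv ℝ φ) (𝓕 t, θ t, ξ t) (deriv 𝓕 t, deriv θ t, deriv ξ t)) (0, 1, 0)) t := by
    have := hcomp.clm_apply (hasDerivAt_const t ((0, 1, 0) : E × ℝ × F))
    have h := this.neg; simp only [map_zero, add_zero] at h; exact h
  have hds : deriv (fun τ => -(fderiv ℝ φ ((𝓕 τ, θ τ, ξ τ) : E × ℝ × F)) (0, 1, 0)) t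
      = -(fderiv ℝ (fderiv ℝ φ) (𝓕 t, θ t, ξ t) (deriv 𝓕 t, deriv θ t, deriv ξ t)) (0, 1, 0) :=
    happ.deriv
  rw [hds] at hbal
  have hsplit : ((deriv 𝓕 t, deriv θ t, deriv ξ t) : E × ℝ × F)
      = (deriv 𝓕 t, 0, 0) + deriv θ t • ((0, 1, 0) : E × ℝ × F) + (0, 0, deriv ξ t) := by
    simp [Prod.ext_iff]
  rw [hsplit, map_add, map_add, map_smul] at hbal
  simp only [ContinuousLinearMap.add_apply, ContinuousLinearMap.coe_smul',
    Pi.smul_apply, smul_eq_mul] at hbal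
  linarith
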